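/- Let (X,d) be a complete metric space, k ∈ ℕ, and T : X^k → X satisfy for all u₁,…,u_k, v₁,…,v_k ∈ X: d(T(u₁,…,u_k), T(v₁,…,v_k)) ≤ (β(d(u_k, v_k))/2)·( d(T(u₁,…,u_k), u_k) + d(T(v₁,…,v_k), v_k) ), where β is a Geraghty function. Then there exists u ∈ X with T(u,…,u) = u, and for any base points x₁,…,x_k ∈ X the k-Picard sequence defined by x_{n+k} := T(x_n,…,x_{n+k-1}) converges to u. -/

import Mathlib

open Filter Topology

def IsGeraghty (β : ℝ → ℝ) : Prop :=
  (∀ t : ℝ, 0 ≤ t → 0 ≤ β t ∧ β t < 1) ∧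
  (∀ t : ℕ → ℝ, (∀ n, 0 ≤ t n) →
    Filter.Tendsto (fun n => β (t n)) Filter.atTop (nhds 1) →
    Filter.Tendsto t Filter.atTop (nhds 0))

lemma lemA (β : ℝ → ℝ) (hβ : IsGeraghty β) (e : ℕ → ℝ) (he0 : ∀ n, 0 ≤ e n)
    (hrec : ∀ n, e (n+1) ≤ β (e n) / 2 * (e n + e (n+1))) :
    Tendsto e atTop (𝓝 0) := by
  have hanti : Antitone e := by
    apply antitone_nat_of_succ_le
    intro n
    have hb := hβ.1 (e n) (he0 n)
    nlinarith [hrec n, he0 n, he0 (n+1), mul_nonneg (by linarith [hb.2] : (0:ℝ) ≤ 1 - β (e n)) (by linarith [he0 n, he0 (n+1)] : (0:ℝ) ≤ e n + e (n+1))]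
  have hbdd : BddBelow (Set.range e) := ⟨0, by rintro _ ⟨n, rfl⟩; exact he0 n⟩
  have hlim : Tendsto e atTop (𝓝 (⨅ n, e n)) := tendsto_atTop_ciInf hanti hbdd
  set L := ⨅ n, e n with hL
  have hL0 : 0 ≤ L := le_ciInf he0
  rcases eq_or_lt_of_le hL0 with h | h
  · rwa [← h] at hlim
  · exfalso
    have hLe : ∀ n, L ≤ e n := fun n => ciInf_le hbdd n
    have hden : ∀ n, 0 < e n + e (n+1) := fun n => by linarith [hLe n, hLe (n+1)]
    have hr : Tendsto (fun n => 2 * e (n+1) / (e n + e (n+1))) atTop (𝓝 1) := by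
      have h1 : Tendsto (fun n => e (n+1)) atTop (𝓝 L) :=
        hlim.comp (tendsto_add_atTop_nat 1)
      have h2 : Tendsto (fun n => 2 * e (n+1)) atTop (𝓝 (2 * L)) := h1.const_mul 2
      have h3 : Tendsto (fun n => e n + e (n+1)) atTop (𝓝 (L + L)) := hlim.add h1
      have := h2.div h3 (by linarith)
      simpa [div_self (by linarith : (2:ℝ) * L ≠ 0), show L + L = 2 * L by ring, Pi.div_def] using this
    have hsq : Tendsto (fun n => β (e n)) atTop (𝓝 1) := by
      apply tendsto_of_tendsto_of_tendsto_of_le_of_le hr tendsto_const_nhds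
      · intro n
        rw [div_le_iff₀ (hden n)]
        linarith [hrec n]
      · intro n
        exact le_of_lt (hβ.1 (e n) (he0 n)).2
    have := hβ.2 e he0 hsq
    have : L = 0 := tendsto_nhds_unique hlim this
    linarith

lemma lemB {X : Type*} [MetricSpace X] (x : ℕ → X) (e : ℕ → ℝ) (K : ℕ)
    (he : Tendsto e atTop (𝓝 0)) (he0 : ∀ n, 0 ≤ e n)
    (hd : ∀ n m, dist (x (n + K)) (x (m + K)) ≤ (e n + e m) / 2) :
    CauchySeq x := by
  rw [Metric.cauchySeq_iff]
  intro ε hε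
  obtain ⟨N, hN⟩ := (Metric.tendsto_atTop.1 he) ε hε
  refine ⟨N + K, fun m hm n hn => ?_⟩
  obtain ⟨m', rfl⟩ : ∃ m', m = m' + K := ⟨m - K, by omega⟩
  obtain ⟨n', rfl⟩ : ∃ n', n = n' + K := ⟨n - K, by omega⟩
  have h1 : e m' < ε := by
    have := hN m' (by omega); rw [Real.dist_eq, abs_of_nonneg (by linarith [he0 m'])] at this
    linarith [he0 m']
  have h2 : e n' < ε := by
    have := hN n' (by omega); rw [Real.dist_eq, abs_of_nonneg (by linarith [he0 n'])] at this
    linarith [he0 n']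
  calc dist (x (m' + K)) (x (n' + K)) ≤ (e m' + e n') / 2 := hd m' n'
    _ < ε := by linarith

theorem k_dim_kannan_geraghty {X : Type*} [MetricSpace X] [CompleteSpace X] [Nonempty X]
    (k : ℕ) (hk : 0 < k) (β : ℝ → ℝ) (hβ : IsGeraghty β) (T : (Fin k → X) → X)
    (hT : ∀ a b : Fin k → X,
      dist (T a) (T b) ≤
        β (dist (a ⟨k - 1, by omega⟩) (b ⟨k - 1, by omega⟩)) / 2 *
          (dist (T a) (a ⟨k - 1, by omega⟩) + dist (T b) (b ⟨k - 1, by omega⟩))) :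
    ∃ u : X, T (fun _ => u) = u ∧
      ∀ x : ℕ → X, (∀ n, x (n + k) = T (fun i : Fin k => x (n + i))) →
        Tendsto x atTop (𝓝 u) := by
  set S : X → X := fun x => T (fun _ => x) with hSdef
  have hβ01 : ∀ t : ℝ, 0 ≤ t → 0 ≤ β t ∧ β t < 1 := hβ.1
  have hS : ∀ a b : X, dist (S a) (S b) ≤ β (dist a b) / 2 * (dist (S a) a + dist (S b) b) := by
    intro a b
    simpa using hT (fun _ => a) (fun _ => b)
  -- existence of a fixed point via Picard iteration of S
  obtain ⟨x₀⟩ := ‹Nonempty X›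
  set y : ℕ → X := fun n => S^[n] x₀ with hy
  have hyS : ∀ n, y (n + 1) = S (y n) := fun n => Function.iterate_succ_apply' S n x₀
  set e : ℕ → ℝ := fun n => dist (y (n + 1)) (y n) with he
  have he0 : ∀ n, 0 ≤ e n := fun n => dist_nonneg
  have herec : ∀ n, e (n+1) ≤ β (e n) / 2 * (e n + e (n+1)) := by
    intro n
    have := hS (y (n+1)) (y n)
    rw [← hyS (n+1), ← hyS n] at this
    calc e (n+1) ≤ β (e n) / 2 * (e (n+1) + e n) := this
      _ = β (e n) / 2 * (e n + e (n+1)) := by ring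
  have het : Tendsto e atTop (𝓝 0) := lemA β hβ e he0 herec
  have hydist : ∀ n m, dist (y (n+1)) (y (m+1)) ≤ (e n + e m) / 2 := by
    intro n m
    have h := hS (y n) (y m)
    rw [← hyS n, ← hyS m] at h
    have hb := hβ01 (dist (y n) (y m)) dist_nonneg
    nlinarith [he0 n, he0 m, dist_nonneg (x := y (n+1)) (y := y n), dist_nonneg (x := y (m+1)) (y := y m)]
  have hyC : CauchySeq y := lemB y e 1 het he0 hydist
  obtain ⟨u, hu⟩ := cauchySeq_tendsto_of_complete hyC
  have hfix : S u = u := by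
    have hkey : ∀ n, dist (S u) u / 2 ≤ e n / 2 + dist (y (n+1)) u := by
      intro n
      have h := hS u (y n)
      rw [← hyS n] at h
      have hb := hβ01 (dist u (y n)) dist_nonneg
      have htri : dist (S u) u ≤ dist (S u) (y (n+1)) + dist (y (n+1)) u := dist_triangle _ _ _
      nlinarith [he0 n, dist_nonneg (x := S u) (y := u), dist_nonneg (x := y (n+1)) (y := u)]
    have hten : Tendsto (fun n => e n / 2 + dist (y (n+1)) u) atTop (𝓝 0) := by
      have h1 : Tendsto (fun n => dist (y (n+1)) u) atTop (𝓝 0) :=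
        (tendsto_iff_dist_tendsto_zero.1 hu).comp (tendsto_add_atTop_nat 1)
      have := (het.div_const 2).add h1
      simpa using this
    have : dist (S u) u / 2 ≤ 0 := ge_of_tendsto' hten hkey
    have : dist (S u) u = 0 := le_antisymm (by linarith) dist_nonneg
    exact dist_eq_zero.1 this
  refine ⟨u, hfix, ?_⟩
  -- convergence of every k-Picard sequence
  intro x hx
  have hax : ∀ n, x (n + k) = T (fun i : Fin k => x (n + i)) := hx
  set d : ℕ → ℝ := fun n => dist (x (n + k)) (x (n + (k-1))) with hd
  have hd0 : ∀ n, 0 ≤ d n := fun n => dist_nonneg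
  have hlast : ∀ n : ℕ, (fun i : Fin k => x (n + i)) ⟨k - 1, by omega⟩ = x (n + (k-1)) := by
    intro n; rfl
  have hmain : ∀ n m, dist (x (n + k)) (x (m + k)) ≤
      β (dist (x (n + (k-1))) (x (m + (k-1)))) / 2 * (d n + d m) := by
    intro n m
    have h := hT (fun i : Fin k => x (n + i)) (fun i : Fin k => x (m + i))
    rw [← hax n, ← hax m] at h
    exact h
  have hdrec : ∀ n, d (n+1) ≤ β (d n) / 2 * (d n + d (n+1)) := by
    intro n
    have H := hmain n (n + 1)
    have harg : dist (x (n + (k-1))) (x (n + 1 + (k-1))) = d n := by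
      rw [show n + 1 + (k-1) = n + k from by omega, dist_comm]
    rw [harg] at H
    have hgoal : d (n+1) = dist (x (n + k)) (x (n + 1 + k)) := by
      show dist (x (n + 1 + k)) (x (n + 1 + (k-1))) = _
      rw [show n + 1 + (k-1) = n + k from by omega, dist_comm]
    rw [← hgoal] at H
    exact H
  have hdt : Tendsto d atTop (𝓝 0) := lemA β hβ d hd0 hdrec
  have hxdist : ∀ n m, dist (x (n + k)) (x (m + k)) ≤ (d n + d m) / 2 := by
    intro n m
    have h := hmain n m
    have hb := hβ01 (dist (x (n + (k-1))) (x (m + (k-1)))) dist_nonneg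
    nlinarith [hd0 n, hd0 m]
  have hxC : CauchySeq x := lemB x d k hdt hd0 hxdist
  obtain ⟨v, hv⟩ := cauchySeq_tendsto_of_complete hxC
  have hvfix : S v = v := by
    have hkey : ∀ n, dist (S v) v / 2 ≤ d n / 2 + dist (x (n + k)) v := by
      intro n
      have h0 := hT (fun _ => v) (fun i : Fin k => x (n + i))
      rw [← hax n] at h0
      have h : dist (S v) (x (n + k)) ≤
          β (dist v (x (n + (k-1)))) / 2 * (dist (S v) v + d n) := h0
      have hb := hβ01 (dist v (x (n + (k-1)))) dist_nonneg
      have htri : dist (S v) v ≤ dist (S v) (x (n + k)) + dist (x (n + k)) v := dist_triangle _ _ _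
      nlinarith [hd0 n, dist_nonneg (x := S v) (y := v), dist_nonneg (x := x (n + k)) (y := v)]
    have hten : Tendsto (fun n => d n / 2 + dist (x (n + k)) v) atTop (𝓝 0) := by
      have h1 : Tendsto (fun n => dist (x (n + k)) v) atTop (𝓝 0) :=
        (tendsto_iff_dist_tendsto_zero.1 hv).comp (tendsto_add_atTop_nat k)
      have := (hdt.div_const 2).add h1
      simpa using this
    have : dist (S v) v / 2 ≤ 0 := ge_of_tendsto' hten hkey
    have : dist (S v) v = 0 := le_antisymm (by linarith) dist_nonneg
    exact dist_eq_zero.1 this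
  have huv : v = u := by
    have h := hS u v
    rw [hfix, hvfix] at h
    simp only [dist_self] at h
    have : dist u v ≤ 0 := by
      have hb := hβ01 (dist u v) dist_nonneg
      nlinarith
    have : dist u v = 0 := le_antisymm this dist_nonneg
    exact (dist_eq_zero.1 this).symm
  rwa [huv] at hv
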